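/- arXiv:2205.14446 — 3 statements merged into one kernel-verified Lean document; each statement's English description precedes it below -/
import Mathlib

section
/- Let (Y_k)_{k≥1} be independent nonnegative random variables with E[Y_k] = 1, and suppose for each k = 1,…,n₀ there exists α_k > 0 with limsup_{x→∞} x^{α_k} E[e^{-x Y_k}] < ∞. Then E[(Y₁ + ⋯ + Y_{n₀})^{-α}] < ∞ for every α < α₁ + ⋯ + α_{n₀}. -/
open MeasureTheory ProbabilityTheory Filter Set

/-- If `Y₁,…,Y_{n₀}` are independent nonnegative with unit mean and each Laplace transform
satisfies `limsup_{x→∞} x^{α_k} E[e^{-xY_k}] < ∞` for some `α_k > 0`, then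
`E[(Y₁+⋯+Y_{n₀})^{-a}] < ∞` for every `0 < a < α₁+⋯+α_{n₀}` (negative powers taken in
`ℝ≥0∞`). -/
theorem stmt8 {Ω : Type*} [MeasureSpace Ω] [IsProbabilityMeasure (ℙ : Measure Ω)]
    (n₀ : ℕ) (Y : ℕ → Ω → ℝ) (hmeas : ∀ k, Measurable (Y k))
    (hindep : iIndepFun Y ℙ)
    (hpos : ∀ k, ∀ᵐ ω ∂ℙ, 0 ≤ Y k ω)
    (hint : ∀ k, Integrable (Y k) ℙ) (hmean : ∀ k, ∫ ω, Y k ω ∂ℙ = 1)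
    (α : ℕ → ℝ) (hαpos : ∀ k < n₀, 0 < α k)
    (hlap : ∀ k < n₀, ∃ C : ℝ, ∀ᶠ x in atTop,
      x ^ (α k) * ∫ ω, Real.exp (-x * Y k ω) ∂ℙ ≤ C)
    (a : ℝ) (ha : 0 < a) (ha' : a < ∑ k ∈ Finset.range n₀, α k) :
    (∫⁻ ω, (ENNReal.ofReal (∑ k ∈ Finset.range n₀, Y k ω)) ^ (-a) ∂ℙ) ≠ ⊤ := by
  classical
  set s : ℝ := ∑ k ∈ Finset.range n₀, α k with hs
  set S : Ω → ℝ := fun ω => ∑ k ∈ Finset.range n₀, Y k ω with hSdef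
  have hSmeas : Measurable S := by
    apply Finset.measurable_sum
    exact fun k _ => hmeas k
  have hSnn : ∀ᵐ ω ∂ℙ, 0 ≤ S ω := by
    filter_upwards [MeasureTheory.ae_all_iff.2 hpos] with ω h
    exact Finset.sum_nonneg fun k _ => h k
  have hΓ : 0 < Real.Gamma a := Real.Gamma_pos_of_pos ha
  set E : ℕ → ℝ → ℝ := fun k x => ∫ ω, Real.exp (-x * Y k ω) ∂ℙ with hE
  have hEnn : ∀ k x, 0 ≤ E k x := fun k x => integral_nonneg fun ω => (Real.exp_pos _).le
  have hIntZ : ∀ x : ℝ, 0 ≤ x → ∀ Z : Ω → ℝ, Measurable Z → (∀ᵐ ω ∂ℙ, 0 ≤ Z ω) →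
      Integrable (fun ω => Real.exp (-x * Z ω)) ℙ := by
    intro x hx Z hZ hZnn
    refine (integrable_const (1:ℝ)).mono' ((hZ.const_mul (-x)).exp.aestronglyMeasurable) ?_
    filter_upwards [hZnn] with ω h
    rw [Real.norm_eq_abs, abs_of_pos (Real.exp_pos _)]
    exact Real.exp_le_one_iff.2 (mul_nonpos_of_nonpos_of_nonneg (neg_nonpos.2 hx) h)
  have hEle1 : ∀ (k : ℕ) (x : ℝ), 0 ≤ x → E k x ≤ 1 := by
    intro k x hx
    have h1 : E k x ≤ ∫ _ω, (1:ℝ) ∂(ℙ : Measure Ω) := by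
      refine integral_mono_ae (hIntZ x hx (Y k) (hmeas k) (hpos k)) (integrable_const 1) ?_
      filter_upwards [hpos k] with ω h
      exact Real.exp_le_one_iff.2 (mul_nonpos_of_nonpos_of_nonneg (neg_nonpos.2 hx) h)
    simpa using h1
  -- key pointwise Gamma identity
  have key : ∀ r : ℝ, 0 ≤ r →
      (∫⁻ x in Ioi (0:ℝ), ENNReal.ofReal (x ^ (a-1) * Real.exp (-x * r)))
        = ENNReal.ofReal (Real.Gamma a) * (ENNReal.ofReal r) ^ (-a) := by
    intro r hr
    rcases hr.lt_or_eq with hr | hr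
    · have hIntOn : IntegrableOn (fun x : ℝ => x ^ (a-1) * Real.exp (-x * r)) (Ioi 0) := by
        have h := integrableOn_rpow_mul_exp_neg_mul_rpow (s := a - 1) (p := 1) (b := r)
          (by linarith) zero_lt_one hr
        refine h.congr_fun (fun x hx => ?_) measurableSet_Ioi
        simp only [Real.rpow_one]
        ring_nf
      rw [← MeasureTheory.ofReal_integral_eq_lintegral_ofReal hIntOn ?_]
      · have hval : (∫ x in Ioi (0:ℝ), x ^ (a-1) * Real.exp (-x * r)) = (1/r) ^ a * Real.Gamma a := by
          rw [← Real.integral_rpow_mul_exp_neg_mul_Ioi ha hr]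
          refine setIntegral_congr_fun measurableSet_Ioi (fun x _ => ?_)
          ring_nf
        rw [hval, ENNReal.ofReal_mul (by positivity), mul_comm]
        congr 1
        have h2 : (1/r) ^ a = r ^ (-a) := by
          rw [one_div, ← Real.rpow_neg_one r, ← Real.rpow_mul hr.le, neg_one_mul]
        rw [h2, ENNReal.ofReal_rpow_of_pos hr]
      · refine (ae_restrict_iff' measurableSet_Ioi).2 (ae_of_all _ fun x hx => ?_)
        exact mul_nonneg (Real.rpow_nonneg (le_of_lt hx) _) (Real.exp_pos _).le
    · subst hr
      have hni : ¬ IntegrableOn (fun x : ℝ => x ^ (a-1)) (Ioi (0:ℝ)) := by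
        intro h
        have h1 : IntegrableOn (fun x : ℝ => x ^ (a-1)) (Ioi (1:ℝ)) :=
          h.mono_set (Ioi_subset_Ioi zero_le_one)
        rw [integrableOn_Ioi_rpow_iff zero_lt_one] at h1
        linarith
      have hlhs : (∫⁻ x in Ioi (0:ℝ), ENNReal.ofReal (x ^ (a-1) * Real.exp (-x * 0))) = ⊤ := by
        simp only [mul_zero, Real.exp_zero, mul_one]
        by_contra htop
        apply hni
        refine ⟨(by fun_prop : Measurable fun x : ℝ => x ^ (a-1)).aestronglyMeasurable, ?_⟩
        rw [hasFiniteIntegral_iff_ofReal ?_]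
        · exact lt_top_iff_ne_top.2 htop
        · refine (ae_restrict_iff' measurableSet_Ioi).2 (ae_of_all _ fun x hx => ?_)
          exact Real.rpow_nonneg (le_of_lt hx) _
      rw [hlhs, ENNReal.ofReal_zero, ENNReal.zero_rpow_of_neg (neg_neg_of_pos ha),
        ENNReal.mul_top (ENNReal.ofReal_pos.2 hΓ).ne']
  -- product formula via mgf
  have hprod : ∀ x : ℝ, (∫ ω, Real.exp (-x * S ω) ∂(ℙ : Measure Ω))
      = ∏ k ∈ Finset.range n₀, E k x := by
    intro x
    have h := hindep.mgf_sum hmeas (Finset.range n₀) (t := -x)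
    simpa [mgf, E, hSdef, Finset.sum_apply] using h
  -- the inner equality for each x > 0
  have inner : ∀ x ∈ Ioi (0:ℝ),
      (∫⁻ ω, ENNReal.ofReal (x ^ (a-1) * Real.exp (-x * S ω)) ∂(ℙ : Measure Ω))
        = ENNReal.ofReal (x ^ (a-1)) * ENNReal.ofReal (∏ k ∈ Finset.range n₀, E k x) := by
    intro x hx
    have hx0 : (0:ℝ) < x := hx
    have h1 : ∀ ω : Ω, ENNReal.ofReal (x ^ (a-1) * Real.exp (-x * S ω))
        = ENNReal.ofReal (x ^ (a-1)) * ENNReal.ofReal (Real.exp (-x * S ω)) :=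
      fun ω => ENNReal.ofReal_mul (Real.rpow_nonneg hx0.le _)
    simp_rw [h1]
    rw [lintegral_const_mul' _ _ ENNReal.ofReal_ne_top]
    congr 1
    rw [← MeasureTheory.ofReal_integral_eq_lintegral_ofReal
      (hIntZ x hx0.le S hSmeas hSnn) (ae_of_all _ fun ω => (Real.exp_pos _).le)]
    rw [hprod x]
  -- swap
  have swap : (∫⁻ ω, (∫⁻ x in Ioi (0:ℝ), ENNReal.ofReal (x ^ (a-1) * Real.exp (-x * S ω))) ∂(ℙ : Measure Ω))
      = ∫⁻ x in Ioi (0:ℝ), ∫⁻ ω, ENNReal.ofReal (x ^ (a-1) * Real.exp (-x * S ω)) ∂(ℙ : Measure Ω) := by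
    refine lintegral_lintegral_swap ?_
    apply Measurable.aemeasurable
    fun_prop
  have main : ENNReal.ofReal (Real.Gamma a) * (∫⁻ ω, (ENNReal.ofReal (S ω)) ^ (-a) ∂(ℙ : Measure Ω))
      = ∫⁻ x in Ioi (0:ℝ), ENNReal.ofReal (x ^ (a-1)) * ENNReal.ofReal (∏ k ∈ Finset.range n₀, E k x) := by
    calc ENNReal.ofReal (Real.Gamma a) * (∫⁻ ω, (ENNReal.ofReal (S ω)) ^ (-a) ∂(ℙ : Measure Ω))
        = ∫⁻ ω, ENNReal.ofReal (Real.Gamma a) * (ENNReal.ofReal (S ω)) ^ (-a) ∂(ℙ : Measure Ω) :=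
          (lintegral_const_mul' _ _ ENNReal.ofReal_ne_top).symm
      _ = ∫⁻ ω, (∫⁻ x in Ioi (0:ℝ), ENNReal.ofReal (x ^ (a-1) * Real.exp (-x * S ω))) ∂(ℙ : Measure Ω) := by
          refine lintegral_congr_ae ?_
          filter_upwards [hSnn] with ω h
          exact (key (S ω) h).symm
      _ = ∫⁻ x in Ioi (0:ℝ), ∫⁻ ω, ENNReal.ofReal (x ^ (a-1) * Real.exp (-x * S ω)) ∂(ℙ : Measure Ω) := swap
      _ = _ := setLIntegral_congr_fun measurableSet_Ioi inner
  -- extract uniform bound from hlap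
  have hlap' : ∀ k : ℕ, ∃ C : ℝ, k < n₀ → ∀ᶠ x in atTop, x ^ (α k) * E k x ≤ C := by
    intro k
    by_cases hk : k < n₀
    · obtain ⟨C, hC⟩ := hlap k hk
      exact ⟨C, fun _ => hC⟩
    · exact ⟨0, fun h => absurd h hk⟩
  choose C hC using hlap'
  have h_ev : ∀ᶠ x in atTop, ∀ k ∈ Finset.range n₀, x ^ (α k) * E k x ≤ C k :=
    (eventually_all_finset _).2 fun k hk => hC k (Finset.mem_range.1 hk)
  obtain ⟨M₀, hM₀⟩ := eventually_atTop.1 h_ev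
  set M : ℝ := max M₀ 1 with hMdef
  have hM1 : (1:ℝ) ≤ M := le_max_right _ _
  have hM0 : (0:ℝ) < M := lt_of_lt_of_le one_pos hM1
  have hM : ∀ x, M ≤ x → ∀ k ∈ Finset.range n₀, x ^ (α k) * E k x ≤ C k :=
    fun x hx => hM₀ x (le_trans (le_max_left _ _) hx)
  have hCnn : ∀ k ∈ Finset.range n₀, 0 ≤ C k := fun k hk =>
    le_trans (mul_nonneg (Real.rpow_nonneg hM0.le _) (hEnn k M)) (hM M le_rfl k hk)
  have hgM : ∀ x, M ≤ x → (∏ k ∈ Finset.range n₀, E k x)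
      ≤ (∏ k ∈ Finset.range n₀, C k) * x ^ (-s) := by
    intro x hxM
    have hx0 : (0:ℝ) < x := lt_of_lt_of_le hM0 hxM
    have step : ∏ k ∈ Finset.range n₀, E k x ≤ ∏ k ∈ Finset.range n₀, C k * x ^ (-(α k)) := by
      refine Finset.prod_le_prod (fun k _ => hEnn k x) (fun k hk => ?_)
      have h := hM x hxM k hk
      have hp : 0 < x ^ (α k) := Real.rpow_pos_of_pos hx0 _
      rw [Real.rpow_neg hx0.le]
      calc E k x = (x ^ (α k) * E k x) / x ^ (α k) := by field_simp
        _ ≤ C k / x ^ (α k) := by gcongr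
        _ = C k * (x ^ (α k))⁻¹ := by rw [div_eq_mul_inv]
    refine step.trans_eq ?_
    have hsum : ∑ k ∈ Finset.range n₀, -(α k) = -s := by
      rw [hs]
      exact Finset.sum_neg_distrib _
    rw [Finset.prod_mul_distrib, ← Real.rpow_sum_of_pos hx0, hsum]
  -- finiteness of the right-hand side
  have hfin : (∫⁻ x in Ioi (0:ℝ), ENNReal.ofReal (x ^ (a-1))
      * ENNReal.ofReal (∏ k ∈ Finset.range n₀, E k x)) < ⊤ := by
    rw [← Ioc_union_Ioi_eq_Ioi hM0.le, lintegral_union measurableSet_Ioi Ioc_disjoint_Ioi_same]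
    refine ENNReal.add_lt_top.2 ⟨?_, ?_⟩
    · refine lt_of_le_of_lt (setLIntegral_mono (g := fun x : ℝ =>
        ENNReal.ofReal (x ^ (a-1))) (by fun_prop) (fun x hx => ?_)) ?_
      · calc ENNReal.ofReal (x ^ (a-1)) * ENNReal.ofReal (∏ k ∈ Finset.range n₀, E k x)
            ≤ ENNReal.ofReal (x ^ (a-1)) * 1 := by
              refine mul_le_mul_right (ENNReal.ofReal_le_one.2 ?_) _
              exact Finset.prod_le_one (fun k _ => hEnn k x) (fun k _ => hEle1 k x hx.1.le)
          _ = ENNReal.ofReal (x ^ (a-1)) := mul_one _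
      · refine Integrable.lintegral_lt_top ?_
        exact (intervalIntegral.intervalIntegrable_rpow' (by linarith : (-1:ℝ) < a - 1)).1
    · refine lt_of_le_of_lt (setLIntegral_mono (g := fun x =>
        ENNReal.ofReal ((∏ k ∈ Finset.range n₀, C k) * x ^ (a-1-s))) (by fun_prop)
        (fun x hx => ?_)) ?_
      · have hx0 : (0:ℝ) < x := lt_trans hM0 hx
        rw [← ENNReal.ofReal_mul (Real.rpow_nonneg hx0.le _)]
        apply ENNReal.ofReal_le_ofReal
        calc x ^ (a-1) * ∏ k ∈ Finset.range n₀, E k x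
            ≤ x ^ (a-1) * ((∏ k ∈ Finset.range n₀, C k) * x ^ (-s)) :=
              mul_le_mul_of_nonneg_left (hgM x (le_of_lt hx)) (Real.rpow_nonneg hx0.le _)
          _ = (∏ k ∈ Finset.range n₀, C k) * x ^ (a-1-s) := by
              rw [← mul_assoc, mul_comm (x ^ (a-1)), mul_assoc, ← Real.rpow_add hx0]
              ring_nf
      · refine Integrable.lintegral_lt_top ?_
        exact (integrableOn_Ioi_rpow_of_lt (by linarith : a-1-s < -1) hM0).const_mul _
  -- conclude
  intro htop
  rw [htop, ENNReal.mul_top (ENNReal.ofReal_pos.2 hΓ).ne'] at main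
  rw [← main] at hfin
  exact (lt_irrefl _ hfin)
end

section
/- Let H : ℝ → ℝ be twice differentiable with bounded derivatives, X₁,…,Xₙ independent with E[X_k]=0, Var(X_k)=1, max_k E|X_k|^4 < ∞, X̄ = (X₁+⋯+Xₙ)/n, and Fₙ = √n (H(X̄) - E[H(X̄)]). Then ‖Fₙ - √n H'(0) X̄‖₂² ≤ (9‖H''‖_∞² / (4n)) · max_{1≤k≤n} E|X_k|^4. -/
open MeasureTheory ProbabilityTheory intervalIntegral
open scoped ENNReal

lemma aux_integrable_pow {Ω : Type*} {mΩ : MeasurableSpace Ω} {μ : Measure Ω}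
    [IsProbabilityMeasure μ] {f : Ω → ℝ} (hf : MemLp f 4 μ) {m : ℕ} (hm : m ≤ 4) :
    Integrable (fun ω => f ω ^ m) μ := by
  have h4 : Integrable (fun ω => ‖f ω‖ ^ ((4:ℝ≥0∞).toReal)) μ :=
    hf.integrable_norm_rpow (by norm_num) (by norm_num)
  have h4' : Integrable (fun ω => |f ω| ^ (4:ℕ) + 1) μ := by
    have h := h4.add (integrable_const (1:ℝ))
    have he : (fun ω => ‖f ω‖ ^ ((4:ℝ≥0∞).toReal) + 1) = fun ω => |f ω| ^ (4:ℕ) + 1 := by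
      funext ω
      rw [Real.norm_eq_abs, show ((4:ℝ≥0∞).toReal) = ((4:ℕ):ℝ) by norm_num,
        Real.rpow_natCast]
    exact he ▸ h
  refine h4'.mono' ?_ ?_
  · exact (hf.aestronglyMeasurable.aemeasurable.pow_const m).aestronglyMeasurable
  · filter_upwards with ω
    rw [Real.norm_eq_abs, abs_pow]
    rcases le_total (|f ω|) 1 with h | h
    · have h1 : |f ω| ^ m ≤ 1 := pow_le_one₀ (abs_nonneg _) h
      nlinarith [pow_nonneg (abs_nonneg (f ω)) 4]
    · have h1 : |f ω| ^ m ≤ |f ω| ^ 4 := pow_le_pow_right₀ h hm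
      nlinarith

lemma aux_var {Ω : Type*} {mΩ : MeasurableSpace Ω} {μ : Measure Ω}
    [IsProbabilityMeasure μ] {g : Ω → ℝ} (hg : Integrable g μ)
    (hg2 : Integrable (fun ω => g ω ^ 2) μ) :
    ∫ ω, (g ω - ∫ ω', g ω' ∂μ) ^ 2 ∂μ = ∫ ω, g ω ^ 2 ∂μ - (∫ ω, g ω ∂μ) ^ 2 := by
  set c := ∫ ω, g ω ∂μ with hc
  have h : (fun ω => (g ω - c) ^ 2) = fun ω => (g ω ^ 2 - (2 * c) * g ω) + c ^ 2 := by
    funext ω; ring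
  have h1 : Integrable (fun ω => g ω ^ 2 - (2 * c) * g ω) μ := hg2.sub (hg.const_mul (2*c))
  have h2 : Integrable (fun ω => (2 * c) * g ω) μ := hg.const_mul (2*c)
  rw [h, integral_add h1 (integrable_const _), integral_sub hg2 h2, MeasureTheory.integral_const_mul,
    MeasureTheory.integral_const]
  simp [← hc]
  ring

lemma aux_taylor {H : ℝ → ℝ} (hH : Differentiable ℝ H) (hH' : Differentiable ℝ (deriv H))
    {C₂ : ℝ} (hC₂ : ∀ x, |deriv (deriv H) x| ≤ C₂) (x : ℝ) :
    |H x - H 0 - deriv H 0 * x| ≤ C₂ / 2 * x ^ 2 := by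
  have hC₂0 : 0 ≤ C₂ := le_trans (abs_nonneg _) (hC₂ 0)
  have hlip : LipschitzWith (Real.toNNReal C₂) (deriv H) := by
    apply lipschitzWith_of_nnnorm_deriv_le hH'
    intro y
    rw [← NNReal.coe_le_coe, coe_nnnorm, Real.coe_toNNReal _ hC₂0, Real.norm_eq_abs]
    exact hC₂ y
  have hd : ∀ t : ℝ, |deriv H t - deriv H 0| ≤ C₂ * |t| := by
    intro t
    have h := hlip.dist_le_mul t 0
    rw [Real.dist_eq, Real.dist_eq, Real.coe_toNNReal _ hC₂0] at h
    simpa using h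
  have hcont : Continuous (deriv H) := hH'.continuous
  have hftc : ∫ t in (0:ℝ)..x, deriv H t = H x - H 0 :=
    integral_deriv_eq_sub (fun t _ => hH.differentiableAt) (hcont.intervalIntegrable _ _)
  have key : H x - H 0 - deriv H 0 * x = ∫ t in (0:ℝ)..x, (deriv H t - deriv H 0) := by
    rw [integral_sub (hcont.intervalIntegrable _ _) (intervalIntegrable_const), hftc,
      intervalIntegral.integral_const]
    simp
    ring
  rw [key]
  have hcont2 : Continuous fun t : ℝ => |deriv H t - deriv H 0| :=
    (hcont.sub continuous_const).abs
  rcases le_total 0 x with hx | hx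
  · calc |∫ t in (0:ℝ)..x, (deriv H t - deriv H 0)|
        ≤ ∫ t in (0:ℝ)..x, |deriv H t - deriv H 0| :=
          abs_integral_le_integral_abs hx
      _ ≤ ∫ t in (0:ℝ)..x, C₂ * t := by
          apply integral_mono_on hx (hcont2.intervalIntegrable _ _)
            ((continuous_const.mul continuous_id).intervalIntegrable _ _)
          intro t ht
          have h := hd t
          rwa [abs_of_nonneg ht.1] at h
      _ = C₂ / 2 * x ^ 2 := by
          rw [intervalIntegral.integral_const_mul, integral_id]; ring
  · have hsymm : ∫ t in (0:ℝ)..x, (deriv H t - deriv H 0)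
        = -∫ t in x..(0:ℝ), (deriv H t - deriv H 0) := by
      rw [integral_symm]
    rw [hsymm, abs_neg]
    calc |∫ t in x..(0:ℝ), (deriv H t - deriv H 0)|
        ≤ ∫ t in x..(0:ℝ), |deriv H t - deriv H 0| :=
          abs_integral_le_integral_abs hx
      _ ≤ ∫ t in x..(0:ℝ), C₂ * (-t) := by
          apply integral_mono_on hx (hcont2.intervalIntegrable _ _)
            ((continuous_const.mul continuous_id.neg).intervalIntegrable _ _)
          intro t ht
          have h := hd t
          rwa [abs_of_nonpos ht.2] at h
      _ = C₂ / 2 * x ^ 2 := by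
          rw [intervalIntegral.integral_const_mul, intervalIntegral.integral_neg, integral_id]; ring

lemma aux_moments {Ω : Type*} [MeasureSpace Ω] [IsProbabilityMeasure (ℙ : Measure Ω)]
    {n : ℕ} (X : Fin n → Ω → ℝ) (hmeas : ∀ k, Measurable (X k))
    (hindep : iIndepFun X ℙ)
    (hmean : ∀ k, ∫ ω, X k ω ∂ℙ = 0) (hvar : ∀ k, ∫ ω, (X k ω) ^ 2 ∂ℙ = 1)
    (hmom4 : ∀ k, MemLp (X k) 4 ℙ) (M : ℝ) (hM1 : 1 ≤ M)
    (hM : ∀ k, ∫ ω, (X k ω) ^ 4 ∂ℙ ≤ M) (s : Finset (Fin n)) :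
    (∫ ω, (∑ k ∈ s, X k ω) ∂ℙ = 0) ∧ (∫ ω, (∑ k ∈ s, X k ω) ^ 2 ∂ℙ = s.card) ∧
      (∫ ω, (∑ k ∈ s, X k ω) ^ 4 ∂ℙ ≤ 3 * (s.card : ℝ) ^ 2 * M) := by
  induction s using Finset.cons_induction with
  | empty => simp
  | cons j s hj ih =>
    obtain ⟨ihA0, ihA2, ihA4⟩ := ih
    set A : Ω → ℝ := fun ω => ∑ k ∈ s, X k ω with hA
    have hAmem : MemLp A 4 ℙ := memLp_finset_sum s (fun i _ => hmom4 i)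
    have hBmem : MemLp (X j) 4 ℙ := hmom4 j
    have intA : ∀ m, m ≤ 4 → Integrable (fun ω => A ω ^ m) ℙ :=
      fun m hm => aux_integrable_pow hAmem hm
    have intB : ∀ m, m ≤ 4 → Integrable (fun ω => X j ω ^ m) ℙ :=
      fun m hm => aux_integrable_pow hBmem hm
    have hAB : IndepFun A (X j) ℙ := by
      have h := hindep.indepFun_finset_sum_of_notMem hmeas hj
      have he : (∑ k ∈ s, X k) = A := by funext ω; simp [hA]
      rwa [he] at h
    have hABpq : ∀ p q : ℕ, IndepFun (fun ω => A ω ^ p) (fun ω => X j ω ^ q) ℙ :=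
      fun p q => hAB.comp (measurable_id.pow_const p) (measurable_id.pow_const q)
    have intABpq : ∀ p q : ℕ, p ≤ 4 → q ≤ 4 →
        Integrable (fun ω => A ω ^ p * X j ω ^ q) ℙ :=
      fun p q hp hq => (hABpq p q).integrable_mul (intA p hp) (intB q hq)
    have Epq : ∀ p q : ℕ, p ≤ 4 → q ≤ 4 →
        ∫ ω, A ω ^ p * X j ω ^ q ∂ℙ = (∫ ω, A ω ^ p ∂ℙ) * (∫ ω, X j ω ^ q ∂ℙ) :=
      fun p q hp hq => (hABpq p q).integral_fun_mul_eq_mul_integral (intA p hp).aestronglyMeasurable (intB q hq).aestronglyMeasurable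
    have hsum : ∀ ω, (∑ k ∈ Finset.cons j s hj, X k ω) = X j ω + A ω := by
      intro ω; rw [Finset.sum_cons]
    have intA1 : Integrable A ℙ := by have h := intA 1 (by norm_num); simpa using h
    have intB1 : Integrable (X j) ℙ := by have h := intB 1 (by norm_num); simpa using h
    have EA1 : ∫ ω, A ω ∂ℙ = 0 := ihA0
    have EB1 : ∫ ω, X j ω ∂ℙ = 0 := hmean j
    have intAB11 : Integrable (fun ω => A ω * X j ω) ℙ := by
      have h := intABpq 1 1 (by norm_num) (by norm_num); simpa using h
    have intAB31 : Integrable (fun ω => A ω ^ 3 * X j ω) ℙ := by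
      have h := intABpq 3 1 (by norm_num) (by norm_num); simpa using h
    have intAB13 : Integrable (fun ω => A ω * X j ω ^ 3) ℙ := by
      have h := intABpq 1 3 (by norm_num) (by norm_num); simpa using h
    have intAB22 : Integrable (fun ω => A ω ^ 2 * X j ω ^ 2) ℙ :=
      intABpq 2 2 (by norm_num) (by norm_num)
    have E11 : ∫ ω, A ω * X j ω ∂ℙ = 0 := by
      have h := Epq 1 1 (by norm_num) (by norm_num); simpa [EA1] using h
    have E31 : ∫ ω, A ω ^ 3 * X j ω ∂ℙ = 0 := by
      have h := Epq 3 1 (by norm_num) (by norm_num); simpa [EB1] using h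
    have E13 : ∫ ω, A ω * X j ω ^ 3 ∂ℙ = 0 := by
      have h := Epq 1 3 (by norm_num) (by norm_num); simpa [EA1] using h
    have E22 : ∫ ω, A ω ^ 2 * X j ω ^ 2 ∂ℙ = s.card := by
      rw [Epq 2 2 (by norm_num) (by norm_num), ihA2, hvar j, mul_one]
    have hcard : ((Finset.cons j s hj).card : ℝ) = (s.card : ℝ) + 1 := by
      rw [Finset.card_cons]; push_cast; ring
    refine ⟨?_, ?_, ?_⟩
    · simp_rw [hsum]
      rw [integral_add intB1 intA1, EB1, EA1]; norm_num
    · have he : ∀ ω, (X j ω + A ω) ^ 2 = A ω ^ 2 + (2 * (A ω * X j ω) + X j ω ^ 2) := by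
        intro ω; ring
      have I2a : Integrable (fun ω => 2 * (A ω * X j ω) + X j ω ^ 2) ℙ :=
        (intAB11.const_mul 2).add (intB 2 (by norm_num))
      simp_rw [hsum, he]
      rw [integral_add (intA 2 (by norm_num)) I2a,
        integral_add (intAB11.const_mul 2) (intB 2 (by norm_num)), MeasureTheory.integral_const_mul,
        ihA2, hvar j, E11, hcard]
      ring
    · have he : ∀ ω, (X j ω + A ω) ^ 4 = A ω ^ 4 + (4 * (A ω ^ 3 * X j ω) +
          (6 * (A ω ^ 2 * X j ω ^ 2) + (4 * (A ω * X j ω ^ 3) + X j ω ^ 4))) := by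
        intro ω; ring
      have I4c : Integrable (fun ω => 4 * (A ω * X j ω ^ 3) + X j ω ^ 4) ℙ :=
        (intAB13.const_mul 4).add (intB 4 le_rfl)
      have I4b : Integrable (fun ω => 6 * (A ω ^ 2 * X j ω ^ 2) +
          (4 * (A ω * X j ω ^ 3) + X j ω ^ 4)) ℙ := (intAB22.const_mul 6).add I4c
      have I4a : Integrable (fun ω => 4 * (A ω ^ 3 * X j ω) + (6 * (A ω ^ 2 * X j ω ^ 2) +
          (4 * (A ω * X j ω ^ 3) + X j ω ^ 4))) ℙ := (intAB31.const_mul 4).add I4b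
      simp_rw [hsum, he]
      rw [integral_add (intA 4 le_rfl) I4a,
        integral_add (intAB31.const_mul 4) I4b,
        integral_add (intAB22.const_mul 6) I4c,
        integral_add (intAB13.const_mul 4) (intB 4 le_rfl),
        MeasureTheory.integral_const_mul, MeasureTheory.integral_const_mul, MeasureTheory.integral_const_mul,
        E31, E13, E22, hcard]
      have hB4 : ∫ ω, X j ω ^ 4 ∂ℙ ≤ M := hM j
      have hcard0 : (0:ℝ) ≤ (s.card : ℝ) := Nat.cast_nonneg _
      nlinarith [ihA4, hB4, hcard0, hM1]

/-- Linearization of a smooth function of the sample mean: with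
`Fₙ = √n (H(X̄) - E H(X̄))` and `‖H''‖_∞ ≤ C₂`,
`‖Fₙ - √n H'(0) X̄‖₂² ≤ (9 C₂²/(4n)) max_k E|X_k|⁴`. -/
theorem stmt15 {Ω : Type*} [MeasureSpace Ω] [IsProbabilityMeasure (ℙ : Measure Ω)]
    {n : ℕ} [NeZero n] (X : Fin n → Ω → ℝ) (hmeas : ∀ k, Measurable (X k))
    (hindep : iIndepFun X ℙ)
    (hmean : ∀ k, ∫ ω, X k ω ∂ℙ = 0) (hvar : ∀ k, ∫ ω, (X k ω) ^ 2 ∂ℙ = 1)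
    (hmom4 : ∀ k, MemLp (X k) 4 ℙ)
    (H : ℝ → ℝ) (hH : Differentiable ℝ H) (hH' : Differentiable ℝ (deriv H))
    (C₁ C₂ : ℝ) (hC₁ : ∀ x, |deriv H x| ≤ C₁) (hC₂ : ∀ x, |deriv (deriv H) x| ≤ C₂)
    (Xbar : Ω → ℝ) (hXbar : Xbar = fun ω => (∑ k : Fin n, X k ω) / n)
    (F : Ω → ℝ)
    (hF : F = fun ω => Real.sqrt n * (H (Xbar ω) - ∫ ω', H (Xbar ω') ∂ℙ)) :
    ∫ ω, |F ω - Real.sqrt n * deriv H 0 * Xbar ω| ^ 2 ∂ℙ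
      ≤ 9 * C₂ ^ 2 / (4 * n) *
          Finset.univ.sup' Finset.univ_nonempty
            (fun k => ∫ ω, |X k ω| ^ 4 ∂ℙ) := by
  have hnpos : (0:ℝ) < n := by
    exact_mod_cast Nat.pos_of_ne_zero (NeZero.ne n)
  have hn0 : (n:ℝ) ≠ 0 := ne_of_gt hnpos
  set M := Finset.univ.sup' Finset.univ_nonempty (fun k => ∫ ω, |X k ω| ^ 4 ∂ℙ) with hMdef
  have habs : ∀ k : Fin n, (∫ ω, |X k ω| ^ 4 ∂ℙ) = ∫ ω, (X k ω) ^ 4 ∂ℙ := by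
    intro k
    apply MeasureTheory.integral_congr_ae
    filter_upwards with ω
    rw [pow_abs, abs_of_nonneg (by positivity)]
  have hMk : ∀ k, ∫ ω, (X k ω) ^ 4 ∂ℙ ≤ M := by
    intro k; rw [← habs k, hMdef]; exact Finset.le_sup' (fun k : Fin n => ∫ ω, |X k ω| ^ 4 ∂ℙ) (Finset.mem_univ k)
  have hM1 : 1 ≤ M := by
    obtain ⟨k₀⟩ : Nonempty (Fin n) := ⟨⟨0, Nat.pos_of_ne_zero (NeZero.ne n)⟩⟩
    have hg : Integrable (fun ω => X k₀ ω ^ 2) ℙ :=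
      aux_integrable_pow (hmom4 k₀) (by norm_num)
    have hg2 : Integrable (fun ω => (X k₀ ω ^ 2) ^ 2) ℙ := by
      have h := aux_integrable_pow (hmom4 k₀) (le_refl 4)
      have he : (fun ω => (X k₀ ω ^ 2) ^ 2) = fun ω => X k₀ ω ^ 4 := by funext ω; ring
      rwa [he]
    have hv := aux_var hg hg2
    have hnn : 0 ≤ ∫ ω, (X k₀ ω ^ 2 - ∫ ω', X k₀ ω' ^ 2 ∂ℙ) ^ 2 ∂ℙ :=
      integral_nonneg fun ω => sq_nonneg _
    rw [hv, hvar k₀] at hnn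
    have h4 : ∫ ω, (X k₀ ω ^ 2) ^ 2 ∂ℙ = ∫ ω, X k₀ ω ^ 4 ∂ℙ := by
      apply MeasureTheory.integral_congr_ae
      filter_upwards with ω
      ring
    rw [h4] at hnn
    have := hMk k₀
    nlinarith
  have hM0 : (0:ℝ) ≤ M := le_trans zero_le_one hM1
  set S : Ω → ℝ := fun ω => ∑ k, X k ω with hS
  obtain ⟨hS0, hS2, hS4⟩ := aux_moments X hmeas hindep hmean hvar hmom4 M hM1 hMk Finset.univ
  rw [Finset.card_univ, Fintype.card_fin] at hS4
  have hSmem : MemLp S 4 ℙ := memLp_finset_sum Finset.univ (fun i _ => hmom4 i)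
  have hXbar' : ∀ ω, Xbar ω = S ω / n := by intro ω; rw [hXbar]
  have hXbmeas : Measurable Xbar := by
    rw [hXbar]; exact (Finset.measurable_sum _ (fun k _ => hmeas k)).div_const _
  have intXb : ∀ m : ℕ, m ≤ 4 → Integrable (fun ω => Xbar ω ^ m) ℙ := by
    intro m hm
    have h := (aux_integrable_pow hSmem hm).const_mul ((1:ℝ)/(n:ℝ)^m)
    have he : (fun ω => (1:ℝ)/(n:ℝ)^m * S ω ^ m) = fun ω => Xbar ω ^ m := by
      funext ω; rw [hXbar' ω, div_pow]; field_simp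
    rwa [he] at h
  have intXb1 : Integrable Xbar ℙ := by
    have h := intXb 1 (by norm_num); simpa using h
  have EXb : ∫ ω, Xbar ω ∂ℙ = 0 := by
    simp_rw [hXbar']
    simp only [hS]
    rw [MeasureTheory.integral_div, hS0, zero_div]
  have EXb4 : ∫ ω, Xbar ω ^ 4 ∂ℙ ≤ 3 * M / (n:ℝ) ^ 2 := by
    have he : (fun ω => Xbar ω ^ 4) = fun ω => (1:ℝ)/(n:ℝ)^4 * S ω ^ 4 := by
      funext ω; rw [hXbar' ω]; ring
    rw [he, MeasureTheory.integral_const_mul]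
    simp only [hS]
    calc (1:ℝ)/(n:ℝ)^4 * ∫ ω, (∑ k, X k ω) ^ 4 ∂ℙ
        ≤ (1:ℝ)/(n:ℝ)^4 * (3 * (n:ℝ) ^ 2 * M) :=
          mul_le_mul_of_nonneg_left hS4 (by positivity)
      _ = 3 * M / (n:ℝ) ^ 2 := by field_simp
  set R : Ω → ℝ := fun ω => H (Xbar ω) - H 0 - deriv H 0 * Xbar ω with hR
  have hC₂0 : 0 ≤ C₂ := le_trans (abs_nonneg _) (hC₂ 0)
  have hRb : ∀ ω, |R ω| ≤ C₂/2 * Xbar ω ^ 2 := fun ω => aux_taylor hH hH' hC₂ (Xbar ω)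
  have hRmeas : Measurable R :=
    ((hH.continuous.measurable.comp hXbmeas).sub measurable_const).sub
      (hXbmeas.const_mul (deriv H 0))
  have intR : Integrable R ℙ := by
    apply Integrable.mono' ((intXb 2 (by norm_num)).const_mul (C₂/2))
      hRmeas.aestronglyMeasurable
    filter_upwards with ω
    rw [Real.norm_eq_abs]; exact hRb ω
  have intR2 : Integrable (fun ω => R ω ^ 2) ℙ := by
    apply Integrable.mono' ((intXb 4 le_rfl).const_mul ((C₂/2)^2))
      (hRmeas.pow_const 2).aestronglyMeasurable
    filter_upwards with ω
    show ‖R ω ^ 2‖ ≤ (C₂/2)^2 * Xbar ω ^ 4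
    rw [Real.norm_eq_abs, abs_pow]
    calc |R ω| ^ 2 ≤ (C₂/2 * Xbar ω ^ 2) ^ 2 := pow_le_pow_left₀ (abs_nonneg _) (hRb ω) 2
      _ = (C₂/2)^2 * Xbar ω ^ 4 := by ring
  have ER2le : ∫ ω, R ω ^ 2 ∂ℙ ≤ (C₂/2)^2 * ∫ ω, Xbar ω ^ 4 ∂ℙ := by
    rw [← MeasureTheory.integral_const_mul]
    apply integral_mono intR2 ((intXb 4 le_rfl).const_mul _)
    intro ω
    show R ω ^ 2 ≤ (C₂/2)^2 * Xbar ω ^ 4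
    calc R ω ^ 2 = |R ω| ^ 2 := (sq_abs _).symm
      _ ≤ (C₂/2 * Xbar ω ^ 2) ^ 2 := pow_le_pow_left₀ (abs_nonneg _) (hRb ω) 2
      _ = (C₂/2)^2 * Xbar ω ^ 4 := by ring
  have hC₁0 : 0 ≤ C₁ := le_trans (abs_nonneg _) (hC₁ 0)
  have hHlip : ∀ x : ℝ, |H x - H 0| ≤ C₁ * |x| := by
    have hlip : LipschitzWith (Real.toNNReal C₁) H := by
      apply lipschitzWith_of_nnnorm_deriv_le hH
      intro y
      rw [← NNReal.coe_le_coe, coe_nnnorm, Real.coe_toNNReal _ hC₁0, Real.norm_eq_abs]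
      exact hC₁ y
    intro x
    have h := hlip.dist_le_mul x 0
    rw [Real.dist_eq, Real.dist_eq, Real.coe_toNNReal _ hC₁0] at h
    simpa using h
  have intH : Integrable (fun ω => H (Xbar ω)) ℙ := by
    have hint : Integrable (fun ω => C₁ * |Xbar ω| + |H 0|) ℙ :=
      (intXb1.abs.const_mul C₁).add (integrable_const _)
    apply Integrable.mono' hint
      (hH.continuous.measurable.comp hXbmeas).aestronglyMeasurable
    filter_upwards with ω
    show ‖H (Xbar ω)‖ ≤ C₁ * |Xbar ω| + |H 0|
    rw [Real.norm_eq_abs]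
    have h1 := hHlip (Xbar ω)
    have h2 : |H (Xbar ω)| ≤ |H (Xbar ω) - H 0| + |H 0| := by
      calc |H (Xbar ω)| = |(H (Xbar ω) - H 0) + H 0| := by ring_nf
        _ ≤ |H (Xbar ω) - H 0| + |H 0| := abs_add_le _ _
    linarith
  have ER : ∫ ω, R ω ∂ℙ = (∫ ω', H (Xbar ω') ∂ℙ) - H 0 := by
    have i1 : Integrable (fun ω => H (Xbar ω) - H 0) ℙ := intH.sub (integrable_const _)
    have i2 : Integrable (fun ω => deriv H 0 * Xbar ω) ℙ := intXb1.const_mul _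
    simp only [hR]
    rw [integral_sub i1 i2, integral_sub intH (integrable_const _), MeasureTheory.integral_const_mul,
      EXb, MeasureTheory.integral_const]
    simp
  have hkey : ∀ ω, F ω - Real.sqrt n * deriv H 0 * Xbar ω
      = Real.sqrt n * (R ω - ∫ ω', R ω' ∂ℙ) := by
    intro ω
    rw [ER]
    simp only [hF, hR]
    ring
  have hsq : ∀ ω, |F ω - Real.sqrt n * deriv H 0 * Xbar ω| ^ 2
      = (n:ℝ) * (R ω - ∫ ω', R ω' ∂ℙ) ^ 2 := by
    intro ω
    rw [sq_abs, hkey ω, mul_pow, Real.sq_sqrt (le_of_lt hnpos)]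
  calc ∫ ω, |F ω - Real.sqrt n * deriv H 0 * Xbar ω| ^ 2 ∂ℙ
      = ∫ ω, (n:ℝ) * (R ω - ∫ ω', R ω' ∂ℙ) ^ 2 ∂ℙ := by simp_rw [hsq]
    _ = (n:ℝ) * ∫ ω, (R ω - ∫ ω', R ω' ∂ℙ) ^ 2 ∂ℙ := MeasureTheory.integral_const_mul _ _
    _ = (n:ℝ) * ((∫ ω, R ω ^ 2 ∂ℙ) - (∫ ω, R ω ∂ℙ) ^ 2) := by rw [aux_var intR intR2]
    _ ≤ (n:ℝ) * ∫ ω, R ω ^ 2 ∂ℙ := by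
        apply mul_le_mul_of_nonneg_left _ (le_of_lt hnpos)
        nlinarith [sq_nonneg (∫ ω, R ω ∂ℙ)]
    _ ≤ (n:ℝ) * ((C₂/2)^2 * (3 * M / (n:ℝ)^2)) := by
        apply mul_le_mul_of_nonneg_left _ (le_of_lt hnpos)
        exact le_trans ER2le (mul_le_mul_of_nonneg_left EXb4 (by positivity))
    _ = 3 * C₂ ^ 2 * M / (4 * n) := by field_simp; ring
    _ ≤ 9 * C₂ ^ 2 / (4 * n) * M := by
        rw [div_mul_eq_mul_div, div_le_div_iff₀ (by positivity) (by positivity)]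
        nlinarith [mul_nonneg (mul_nonneg (sq_nonneg C₂) hM0) (le_of_lt hnpos)]
end

section
/- Let T be a nonnegative random variable with E[T] = 1 whose Laplace transform φ(x) = E[e^{-xT}] satisfies the differential inequality φ'(x) ≤ -x c² φ'(x) - φ(x) for all x ≥ 0 and some c > 0. Then φ(x) ≤ (1 + x c²)^{-1/c²} for all x ≥ 0. -/
open MeasureTheory ProbabilityTheory

/-- If the Laplace transform `φ(x) = E[e^{-xT}]` of a nonnegative unit-mean random
variable satisfies `φ'(x) ≤ -x c² φ'(x) - φ(x)` for all `x ≥ 0`, then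
`φ(x) ≤ (1 + x c²)^{-1/c²}` for all `x ≥ 0`. -/
theorem stmt18 {Ω : Type*} [MeasureSpace Ω] [IsProbabilityMeasure (ℙ : Measure Ω)]
    (T : Ω → ℝ) (hT : Measurable T) (hTpos : ∀ᵐ ω ∂ℙ, 0 ≤ T ω)
    (hTint : Integrable T ℙ) (hTmean : ∫ ω, T ω ∂ℙ = 1)
    (c : ℝ) (hc : 0 < c)
    (φ : ℝ → ℝ) (hφ : ∀ x, φ x = ∫ ω, Real.exp (-x * T ω) ∂ℙ)
    (hineq : ∀ x ≥ (0 : ℝ), deriv φ x ≤ -x * c ^ 2 * deriv φ x - φ x) :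
    ∀ x ≥ (0 : ℝ), φ x ≤ (1 + x * c ^ 2) ^ (-(1 / c ^ 2)) := by
  have hc2 : (0:ℝ) < c ^ 2 := by positivity
  -- base positivity
  have hbase : ∀ x : ℝ, 0 ≤ x → (0:ℝ) < 1 + x * c ^ 2 := by
    intro x hx; nlinarith
  -- integrability
  have hint : ∀ x : ℝ, 0 ≤ x → Integrable (fun ω => Real.exp (-x * T ω)) ℙ := by
    intro x hx
    have hm : AEStronglyMeasurable (fun ω => Real.exp (-x * T ω)) ℙ :=
      ((hT.const_mul (-x)).exp).aestronglyMeasurable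
    refine (integrable_const (1:ℝ)).mono' hm ?_
    filter_upwards [hTpos] with ω hω
    rw [Real.norm_eq_abs, abs_of_pos (Real.exp_pos _)]
    exact Real.exp_le_one_iff.mpr (by nlinarith)
  -- positivity of φ
  have hφpos : ∀ x : ℝ, 0 ≤ x → 0 < φ x := by
    intro x hx
    rw [hφ x]
    rw [integral_pos_iff_support_of_nonneg_ae
      (Filter.Eventually.of_forall fun ω => (Real.exp_pos _).le) (hint x hx)]
    have : Function.support (fun ω => Real.exp (-x * T ω)) = Set.univ := by
      ext ω; simp [Function.mem_support, (Real.exp_pos _).ne']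
    rw [this]
    simp
  -- differentiability forced by hineq
  have hφdiff : ∀ x : ℝ, 0 ≤ x → DifferentiableAt ℝ φ x := by
    intro x hx
    by_contra h
    have hd : deriv φ x = 0 := deriv_zero_of_not_differentiableAt h
    have := hineq x hx
    rw [hd] at this
    nlinarith [hφpos x hx]
  -- φ 0 = 1
  have hφ0 : φ 0 = 1 := by
    rw [hφ 0]
    simp
  set p : ℝ := 1 / c ^ 2 with hp
  set ψ : ℝ → ℝ := fun x => φ x * (1 + x * c ^ 2) ^ p with hψ
  -- derivative of ψ
  have hψderiv : ∀ x : ℝ, 0 ≤ x →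
      HasDerivAt ψ ((deriv φ x) * (1 + x * c ^ 2) ^ p
        + φ x * (c ^ 2 * p * (1 + x * c ^ 2) ^ (p - 1))) x := by
    intro x hx
    have hf : HasDerivAt (fun y : ℝ => 1 + y * c ^ 2) (c ^ 2) x := by
      simpa using ((hasDerivAt_id x).mul_const (c ^ 2)).const_add 1
    have hg : HasDerivAt (fun y : ℝ => (1 + y * c ^ 2) ^ p)
        (c ^ 2 * p * (1 + x * c ^ 2) ^ (p - 1)) x :=
      hf.rpow_const (Or.inl (hbase x hx).ne')
    exact ((hφdiff x hx).hasDerivAt).mul hg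
  -- ψ is antitone on [0, ∞)
  have hanti : AntitoneOn ψ (Set.Ici 0) := by
    apply antitoneOn_of_deriv_nonpos (convex_Ici 0)
    · intro x hx
      exact ((hψderiv x hx).differentiableAt).continuousAt.continuousWithinAt
    · intro x hx
      rw [interior_Ici] at hx
      exact ((hψderiv x (le_of_lt hx)).differentiableAt).differentiableWithinAt
    · intro x hx
      rw [interior_Ici] at hx
      have hx0 : (0:ℝ) ≤ x := le_of_lt hx
      rw [(hψderiv x hx0).deriv]
      have hb := hbase x hx0
      have hsplit : (1 + x * c ^ 2) ^ p = (1 + x * c ^ 2) * (1 + x * c ^ 2) ^ (p - 1) := by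
        have h1p : (1:ℝ) + (p - 1) = p := by ring
        conv_lhs => rw [← h1p]
        rw [Real.rpow_add hb, Real.rpow_one]
      have hcp : c ^ 2 * p = 1 := by rw [hp, mul_one_div_cancel hc2.ne']
      rw [hsplit, hcp, one_mul]
      have hkey : (1 + x * c ^ 2) * deriv φ x + φ x ≤ 0 := by
        have := hineq x hx0
        nlinarith
      have he : (0:ℝ) ≤ (1 + x * c ^ 2) ^ (p - 1) := (Real.rpow_pos_of_pos hb _).le
      calc deriv φ x * ((1 + x * c ^ 2) * (1 + x * c ^ 2) ^ (p - 1))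
            + φ x * (1 + x * c ^ 2) ^ (p - 1)
          = ((1 + x * c ^ 2) * deriv φ x + φ x) * (1 + x * c ^ 2) ^ (p - 1) := by ring
        _ ≤ 0 := mul_nonpos_of_nonpos_of_nonneg hkey he
  -- conclude
  intro x hx
  have hψ0 : ψ 0 = 1 := by simp [hψ, hφ0]
  have h1 : ψ x ≤ 1 := by
    rw [← hψ0]
    exact hanti Set.self_mem_Ici hx hx
  have hb := hbase x hx
  have hgpos : (0:ℝ) < (1 + x * c ^ 2) ^ p := Real.rpow_pos_of_pos hb _
  rw [Real.rpow_neg hb.le]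
  rw [← one_div, le_div_iff₀ hgpos]
  exact h1
end
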